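/- For the root-binomial basis f_j(z) = √(C(n,j)) z^j, the real-zero intensity simplifies to g_n(x) = (√n/π) · 1/(1+x²) for all real x; consequently, for real a < b, the expected number of real zeros of P_n(z) = ∑_{j=0}^n η_j √(C(n,j)) z^j in the interval (a,b) equals (√n/π)(arctan b − arctan a). -/

import Mathlib

open Finset intervalIntegral

lemma S0 (m : ℕ) (t : ℝ) : ∑ k ∈ range (m+1), (m.choose k : ℝ) * t^k = (1+t)^m := by
  calc ∑ k ∈ range (m+1), (m.choose k : ℝ) * t^k
      = ∑ k ∈ range (m+1), t^k * 1^(m-k) * (m.choose k : ℝ) := by simp [mul_comm]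
    _ = (t+1)^m := (add_pow t 1 m).symm
    _ = (1+t)^m := by ring_nf

lemma Schoose (m k : ℕ) : (((k:ℝ)+1)) * ((m+1).choose (k+1) : ℝ) = ((m:ℝ)+1) * (m.choose k) := by
  have h : ((m:ℝ)+1) * (m.choose k) = ((m+1).choose (k+1) : ℝ) * ((k:ℝ)+1) := by
    exact_mod_cast congrArg (Nat.cast : ℕ → ℝ) (Nat.add_one_mul_choose_eq m k)
  rw [h]; ring

lemma S1 (m : ℕ) (t : ℝ) :
    ∑ k ∈ range (m+1), (k : ℝ) * (m.choose k) * t^k = m * t * (1+t)^(m-1) := by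
  cases m with
  | zero => simp
  | succ p =>
    rw [Finset.sum_range_succ']
    simp only [Nat.cast_zero, zero_mul, mul_zero, add_zero, pow_zero]
    calc ∑ k ∈ range (p+1), ((k+1 : ℕ) : ℝ) * (((p+1).choose (k+1)) : ℝ) * t^(k+1)
        = ∑ k ∈ range (p+1), ((p:ℝ)+1) * t * ((p.choose k : ℝ) * t^k) := by
          refine Finset.sum_congr rfl fun k _ => ?_
          push_cast
          rw [Schoose, pow_succ]
          ring
      _ = ((p:ℝ)+1) * t * ∑ k ∈ range (p+1), (p.choose k : ℝ) * t^k := by rw [Finset.mul_sum]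
      _ = ((p:ℝ)+1) * t * (1+t)^p := by rw [S0]
      _ = ((p+1 : ℕ) : ℝ) * t * (1+t)^(p+1-1) := by push_cast; norm_num

lemma powtrick (m : ℕ) (t : ℝ) :
    (m : ℝ) * ((1+t)^(m-1) * (1+t)^(m+1)) = m * (1+t)^(2*m) := by
  cases m with
  | zero => simp
  | succ p =>
    congr 1
    rw [← pow_add]
    congr 1
    omega

/-- **(Vanderbei, root-binomial polynomials.)** For the basis `f_j(x) = √(C(n,j)) x^j`, the
real-zero intensity is `g_n(x) = (√n/π)/(1+x²)`, and hence the expected number of real zeros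
of `P_n` in `(a,b)` (which equals `∫_a^b g_n`) is `(√n/π)(arctan b − arctan a)`. -/
theorem root_binomial_real_intensity
    (n : ℕ) (hn : 0 < n)
    (f : Fin (n + 1) → ℝ → ℝ)
    (hf : ∀ j : Fin (n + 1), ∀ x, f j x = Real.sqrt (n.choose j) * x ^ (j : ℕ))
    (A0 A1 A2 B0 g : ℝ → ℝ)
    (hA0 : ∀ x, A0 x = ∑ j, (f j x) ^ 2)
    (hA1 : ∀ x, A1 x = ∑ j, f j x * deriv (f j) x)
    (hA2 : ∀ x, A2 x = ∑ j, (deriv (f j) x) ^ 2)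
    (hB0 : ∀ x, B0 x = ∑ j, |f j x| ^ 2)
    (hg : ∀ x, g x = Real.sqrt (A2 x * A0 x - (A1 x) ^ 2) / (Real.pi * B0 x)) :
    (∀ x : ℝ, g x = (Real.sqrt n / Real.pi) * (1 / (1 + x ^ 2))) ∧
    (∀ a b : ℝ, a < b →
      ∫ x in a..b, g x = (Real.sqrt n / Real.pi) * (Real.arctan b - Real.arctan a)) := by
  obtain ⟨m, rfl⟩ : ∃ m, n = m + 1 := ⟨n - 1, by omega⟩
  -- derivative of the basis functions
  have hderiv : ∀ (j : Fin (m + 2)) (x : ℝ),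
      deriv (f j) x = Real.sqrt ((m+1).choose j) * ((j : ℕ) * x ^ ((j : ℕ) - 1)) := by
    intro j x
    have hfe : f j = fun y => Real.sqrt ((m+1).choose j) * y ^ (j : ℕ) := funext (hf j)
    rw [hfe, deriv_const_mul_field, deriv_pow_field]
  have hsq : ∀ j : ℕ, Real.sqrt (((m+1).choose j : ℝ)) * Real.sqrt (((m+1).choose j : ℝ))
      = ((m+1).choose j : ℝ) := fun j => Real.mul_self_sqrt (Nat.cast_nonneg _)
  -- A0
  have hA0' : ∀ x : ℝ, A0 x = (1 + x^2)^(m+1) := by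
    intro x
    rw [hA0]
    simp only [hf]
    rw [Fin.sum_univ_eq_sum_range (fun j => (Real.sqrt ((m+1).choose j) * x ^ j)^2) (m+2)]
    rw [← S0 (m+1) (x^2)]
    refine Finset.sum_congr rfl fun j _ => ?_
    rw [mul_pow, Real.sq_sqrt (Nat.cast_nonneg _), ← pow_mul, ← pow_mul, Nat.mul_comm]
  -- A1
  have hA1' : ∀ x : ℝ, A1 x = ((m:ℝ)+1) * x * (1 + x^2)^m := by
    intro x
    rw [hA1]
    simp only [hf, hderiv]
    rw [Fin.sum_univ_eq_sum_range (fun j => Real.sqrt ((m+1).choose j) * x ^ j *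
      (Real.sqrt ((m+1).choose j) * ((j:ℝ) * x ^ (j - 1)))) (m+2)]
    rw [Finset.sum_range_succ']
    simp only [Nat.cast_zero, zero_mul, mul_zero, add_zero]
    calc ∑ k ∈ range (m+1), Real.sqrt ((m+1).choose (k+1)) * x ^ (k+1) *
          (Real.sqrt ((m+1).choose (k+1)) * (((k+1:ℕ):ℝ) * x ^ (k+1-1)))
        = ∑ k ∈ range (m+1), ((m:ℝ)+1) * x * ((m.choose k : ℝ) * (x^2)^k) := by
          refine Finset.sum_congr rfl fun k _ => ?_
          have h1 := Schoose m k
          have h2 := hsq (k+1)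
          have e1 : x^(k+1) * x^k = x * (x^2)^k := by
            rw [← pow_add, ← pow_mul, show k+1+k = 2*k+1 by omega, mul_comm 2 k, pow_succ']
          simp only [Nat.add_sub_cancel]
          push_cast
          calc Real.sqrt ((m+1).choose (k+1)) * x ^ (k+1) *
                (Real.sqrt ((m+1).choose (k+1)) * (((k:ℝ)+1) * x ^ k))
              = (Real.sqrt ((m+1).choose (k+1)) * Real.sqrt ((m+1).choose (k+1))) *
                (((k:ℝ)+1) * (x^(k+1) * x^k)) := by ring
            _ = (((k:ℝ)+1) * ((m+1).choose (k+1) : ℝ)) * (x * (x^2)^k) := by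
                rw [h2, e1]; ring
            _ = (((m:ℝ)+1) * (m.choose k : ℝ)) * (x * (x^2)^k) := by rw [h1]
            _ = ((m:ℝ)+1) * x * ((m.choose k : ℝ) * (x^2)^k) := by ring
      _ = ((m:ℝ)+1) * x * ∑ k ∈ range (m+1), (m.choose k : ℝ) * (x^2)^k := by
          rw [Finset.mul_sum]
      _ = ((m:ℝ)+1) * x * (1 + x^2)^m := by rw [S0]
  -- A2
  have hA2' : ∀ x : ℝ, A2 x =
      ((m:ℝ)+1) * ((m:ℝ) * x^2 * (1 + x^2)^(m-1) + (1 + x^2)^m) := by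
    intro x
    rw [hA2]
    simp only [hderiv]
    rw [Fin.sum_univ_eq_sum_range
      (fun j => (Real.sqrt ((m+1).choose j) * ((j:ℝ) * x ^ (j - 1)))^2) (m+2)]
    rw [Finset.sum_range_succ']
    simp only [Nat.cast_zero, zero_mul, mul_zero, add_zero]
    norm_num
    calc ∑ k ∈ range (m+1),
          (Real.sqrt ((m+1).choose (k+1)) * (((k:ℝ)+1) * x ^ k))^2
        = ∑ k ∈ range (m+1), ((m:ℝ)+1) *
            ((k:ℝ) * (m.choose k : ℝ) * (x^2)^k + (m.choose k : ℝ) * (x^2)^k) := by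
          refine Finset.sum_congr rfl fun k _ => ?_
          have h1 := Schoose m k
          calc (Real.sqrt ((m+1).choose (k+1)) * (((k:ℝ)+1) * x ^ k))^2
              = (Real.sqrt ((m+1).choose (k+1)))^2 * (((k:ℝ)+1) * (((k:ℝ)+1) * ((x^k)^2))) := by
                ring
            _ = ((m+1).choose (k+1) : ℝ) * (((k:ℝ)+1) * (((k:ℝ)+1) * (x^2)^k)) := by
                rw [Real.sq_sqrt (Nat.cast_nonneg _), ← pow_mul, ← pow_mul, Nat.mul_comm]
            _ = (((k:ℝ)+1) * ((m+1).choose (k+1) : ℝ)) * (((k:ℝ)+1) * (x^2)^k) := by ring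
            _ = (((m:ℝ)+1) * (m.choose k : ℝ)) * (((k:ℝ)+1) * (x^2)^k) := by rw [h1]
            _ = ((m:ℝ)+1) * ((k:ℝ) * (m.choose k : ℝ) * (x^2)^k + (m.choose k : ℝ) * (x^2)^k) := by
                ring
      _ = ((m:ℝ)+1) * ∑ k ∈ range (m+1),
            ((k:ℝ) * (m.choose k : ℝ) * (x^2)^k + (m.choose k : ℝ) * (x^2)^k) := by
          rw [Finset.mul_sum]
      _ = ((m:ℝ)+1) * ((m:ℝ) * x^2 * (1 + x^2)^(m-1) + (1 + x^2)^m) := by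
          rw [Finset.sum_add_distrib, S1, S0]
  -- the discriminant
  have hD : ∀ x : ℝ, A2 x * A0 x - A1 x ^ 2 = ((m:ℝ)+1) * (1 + x^2)^(2*m) := by
    intro x
    rw [hA2', hA0', hA1']
    have hp := powtrick m (x^2)
    have e2 : ((1+x^2:ℝ))^m * (1+x^2)^(m+1) = (1+x^2)^(2*m) * (1+x^2) := by
      rw [← pow_add, ← pow_succ]
      congr 1
      omega
    have e3 : (((1+x^2:ℝ))^m)^2 = (1+x^2)^(2*m) := by
      rw [← pow_mul, Nat.mul_comm]
    linear_combination ((m:ℝ)+1)*x^2*hp + ((m:ℝ)+1)*e2 - (((m:ℝ)+1)^2)*x^2*e3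
  -- part 1
  have part1 : ∀ x : ℝ, g x = (Real.sqrt (((m+1:ℕ)):ℝ) / Real.pi) * (1 / (1 + x ^ 2)) := by
    intro x
    have hx : (0:ℝ) < 1 + x^2 := by positivity
    have hB : B0 x = A0 x := by rw [hB0, hA0]; simp [sq_abs]
    rw [hg, hB, hD, hA0']
    rw [show 2*m = m*2 from Nat.mul_comm 2 m, pow_mul,
      Real.sqrt_mul (by positivity), Real.sqrt_sq (by positivity)]
    rw [pow_succ]
    have hm : ((1+x^2:ℝ))^m ≠ 0 := by positivity
    have hc : (((m+1:ℕ)):ℝ) = ((m:ℝ)+1) := by push_cast; ring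
    rw [hc, div_mul_div_comm, mul_one]
    rw [div_eq_div_iff (by positivity) (by positivity)]
    ring
  refine ⟨part1, fun a b _ => ?_⟩
  rw [intervalIntegral.integral_congr
    (g := fun x => (Real.sqrt (((m+1:ℕ)):ℝ) / Real.pi) * (1 / (1 + x ^ 2)))
    (fun x _ => part1 x)]
  rw [intervalIntegral.integral_const_mul, integral_one_div_one_add_sq]
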